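/- Let M = A + B K where A, B are real matrices of sizes n×n and n×m, and suppose there exist a symmetric positive definite Ω ∈ ℝ^{n×n} and Π ∈ ℝ^{m×n} such that (A Ω + B Π)ᵀ Ω⁻¹ (A Ω + B Π) − Ω + Ω Ω ≺ 0, where K = Π Ω⁻¹. Then Mᵀ Ω⁻¹ M − Ω⁻¹ + I ≺ 0, and hence M is Schur stable. -/

import Mathlib

open Matrix

lemma quad_re_aux {n : ℕ} (R : Matrix (Fin n) (Fin n) ℝ) (v : Fin n → ℂ) :
    (star v ⬝ᵥ ((R.map Complex.ofReal) *ᵥ v)).re =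
      (fun i => (v i).re) ⬝ᵥ (R *ᵥ fun i => (v i).re) +
      (fun i => (v i).im) ⬝ᵥ (R *ᵥ fun i => (v i).im) := by
  simp only [dotProduct, mulVec, map_apply, Pi.star_apply, Complex.star_def,
    Finset.mul_sum, Complex.re_sum]
  rw [← Finset.sum_add_distrib]
  refine Finset.sum_congr rfl fun i _ => ?_
  rw [← Finset.sum_add_distrib]
  refine Finset.sum_congr rfl fun j _ => ?_
  simp [Complex.mul_re, Complex.conj_re, Complex.conj_im]

lemma quad_pos_aux {n : ℕ} {R : Matrix (Fin n) (Fin n) ℝ} (hR : R.PosDef)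
    (v : Fin n → ℂ) (hv : v ≠ 0) :
    0 < (star v ⬝ᵥ ((R.map Complex.ofReal) *ᵥ v)).re := by
  rw [quad_re_aux]
  set x : Fin n → ℝ := fun i => (v i).re with hx
  set y : Fin n → ℝ := fun i => (v i).im with hy
  have hxy : x ≠ 0 ∨ y ≠ 0 := by
    by_contra h
    push_neg at h
    exact hv (funext fun i => Complex.ext (congrFun h.1 i) (congrFun h.2 i))
  have hxs : ∀ w : Fin n → ℝ, star w ⬝ᵥ (R *ᵥ w) = w ⬝ᵥ (R *ᵥ w) := fun w => rfl
  rcases hxy with h | h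
  · have h1 := hR.dotProduct_mulVec_pos h; rw [hxs] at h1
    have h2 := hR.posSemidef.dotProduct_mulVec_nonneg y; rw [hxs] at h2
    linarith
  · have h1 := hR.dotProduct_mulVec_pos h; rw [hxs] at h1
    have h2 := hR.posSemidef.dotProduct_mulVec_nonneg x; rw [hxs] at h2
    linarith

lemma star_mulVec_map_aux {n : ℕ} (R : Matrix (Fin n) (Fin n) ℝ) (v : Fin n → ℂ) :
    star ((R.map Complex.ofReal) *ᵥ v) = (R.map Complex.ofReal) *ᵥ star v := by
  funext i
  simp [mulVec, dotProduct, star_sum, star_mul', Complex.conj_ofReal, mul_comm]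

lemma posdef_conj_aux {n : ℕ} {X N : Matrix (Fin n) (Fin n) ℝ} (hX : X.PosDef)
    (hN : IsUnit N.det) : (Nᵀ * X * N).PosDef := by
  have hXt : Xᵀ = X := hX.isHermitian
  rw [posDef_iff_dotProduct_mulVec]
  constructor
  · show (Nᵀ * X * N)ᵀ = _
    rw [transpose_mul, transpose_mul, transpose_transpose, hXt, Matrix.mul_assoc]
  · intro x hx
    have hw : N *ᵥ x ≠ 0 := by
      intro h
      apply hx
      have : N⁻¹ *ᵥ (N *ᵥ x) = x := by
        rw [mulVec_mulVec, Matrix.nonsing_inv_mul _ hN, one_mulVec]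
      rw [h, mulVec_zero] at this
      exact this.symm
    have := hX.dotProduct_mulVec_pos hw
    have he : star x ⬝ᵥ ((Nᵀ * X * N) *ᵥ x) = star (N *ᵥ x) ⬝ᵥ (X *ᵥ (N *ᵥ x)) := by
      rw [← mulVec_mulVec, ← mulVec_mulVec, dotProduct_mulVec (star x) Nᵀ, vecMul_transpose]
      rfl
    rw [he]
    exact this

theorem lmi_implies_closed_loop_schur_stable
    {n m : ℕ} (A : Matrix (Fin n) (Fin n) ℝ) (B : Matrix (Fin n) (Fin m) ℝ)
    (Ω : Matrix (Fin n) (Fin n) ℝ) (hΩ : Ω.PosDef)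
    (Pi : Matrix (Fin m) (Fin n) ℝ)
    (K : Matrix (Fin m) (Fin n) ℝ) (hK : K = Pi * Ω⁻¹)
    (M : Matrix (Fin n) (Fin n) ℝ) (hM : M = A + B * K)
    (hLMI : (-((A * Ω + B * Pi)ᵀ * Ω⁻¹ * (A * Ω + B * Pi) - Ω + Ω * Ω)).PosDef) :
    (-(Mᵀ * Ω⁻¹ * M - Ω⁻¹ + 1)).PosDef ∧
      ∀ μ ∈ spectrum ℂ (M.map (Complex.ofReal)), ‖μ‖ < 1 := by
  set P := Ω⁻¹ with hPdef
  have hdet : IsUnit Ω.det := isUnit_iff_ne_zero.mpr hΩ.det_pos.ne'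
  have h1 : P * Ω = 1 := Matrix.nonsing_inv_mul Ω hdet
  have h2 : Ω * P = 1 := Matrix.mul_nonsing_inv Ω hdet
  have hP : P.PosDef := hΩ.inv
  have hPt : Pᵀ = P := hP.isHermitian
  have hΩt : Ωᵀ = Ω := hΩ.isHermitian
  have hMΩ : M * Ω = A * Ω + B * Pi := by
    rw [hM, hK, Matrix.add_mul, Matrix.mul_assoc B, Matrix.mul_assoc Pi, h1, Matrix.mul_one]
  have hA1 : ∀ Z : Matrix (Fin n) (Fin n) ℝ, P * (Ω * Z) = Z := fun Z => by
    rw [← Matrix.mul_assoc, h1, Matrix.one_mul]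
  have key : (-(Mᵀ * P * M - P + 1)) =
      Pᵀ * (-((A * Ω + B * Pi)ᵀ * P * (A * Ω + B * Pi) - Ω + Ω * Ω)) * P := by
    rw [hPt, ← hMΩ, transpose_mul, hΩt]
    simp only [Matrix.mul_neg, Matrix.neg_mul, Matrix.mul_sub, Matrix.sub_mul,
      Matrix.mul_add, Matrix.add_mul, Matrix.mul_assoc, hA1, h2, Matrix.mul_one,
      Matrix.one_mul, h1]
  have hQ : (-(Mᵀ * P * M - P + 1)).PosDef := by
    rw [key]
    exact posdef_conj_aux hLMI (isUnit_iff_ne_zero.mpr hP.det_pos.ne')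
  refine ⟨hQ, ?_⟩
  intro μ hμ
  set Q := -(Mᵀ * P * M - P + 1) with hQdef
  set Mc := M.map Complex.ofReal with hMc
  rw [spectrum.mem_iff] at hμ
  have hdet0 : ((algebraMap ℂ (Matrix (Fin n) (Fin n) ℂ)) μ - Mc).det = 0 := by
    by_contra hd
    exact hμ ((Matrix.isUnit_iff_isUnit_det _).mpr (isUnit_iff_ne_zero.mpr hd))
  obtain ⟨v, hv0, hv⟩ := (Matrix.exists_mulVec_eq_zero_iff).mpr hdet0
  have heig : Mc *ᵥ v = μ • v := by
    rw [Algebra.algebraMap_eq_smul_one, Matrix.sub_mulVec, Matrix.smul_mulVec,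
      one_mulVec, sub_eq_zero] at hv
    exact hv.symm
  set Pc := P.map Complex.ofReal with hPc
  have ha : 0 < (star v ⬝ᵥ (Pc *ᵥ v)).re := quad_pos_aux hP v hv0
  have hs : 0 < (star v ⬝ᵥ v).re := by
    have := quad_pos_aux Matrix.PosDef.one v hv0
    simpa using this
  have hb : 0 < (star v ⬝ᵥ ((Q.map Complex.ofReal) *ᵥ v)).re := quad_pos_aux hQ v hv0
  have hmul : ∀ (X Y : Matrix (Fin n) (Fin n) ℝ),
      (X * Y).map Complex.ofReal = X.map Complex.ofReal * Y.map Complex.ofReal :=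
    fun X Y => Matrix.map_mul (f := Complex.ofRealHom)
  have hneg : ∀ (X : Matrix (Fin n) (Fin n) ℝ),
      (-X).map Complex.ofReal = -(X.map Complex.ofReal) := fun X => by
    ext i j; simp
  have hQmap : Q.map Complex.ofReal = -(Mcᵀ * Pc * Mc - Pc + 1) := by
    rw [hQdef, hneg, Matrix.map_add _ Complex.ofReal_add, Matrix.map_sub _ Complex.ofReal_sub,
      hmul, hmul, Matrix.map_one _ Complex.ofReal_zero Complex.ofReal_one, Matrix.transpose_map]
  have hquadM : star v ⬝ᵥ ((Mcᵀ * Pc * Mc) *ᵥ v)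
      = (Complex.normSq μ : ℂ) * (star v ⬝ᵥ (Pc *ᵥ v)) := by
    rw [← mulVec_mulVec, ← mulVec_mulVec, dotProduct_mulVec (star v) Mcᵀ,
      vecMul_transpose, ← star_mulVec_map_aux, heig, star_smul, smul_dotProduct,
      mulVec_smul, dotProduct_smul]
    simp only [smul_eq_mul]
    rw [← mul_assoc, Complex.star_def]
    congr 1
    rw [← Complex.normSq_eq_conj_mul_self]
  have hbval : (star v ⬝ᵥ ((Q.map Complex.ofReal) *ᵥ v)).re
      = -(Complex.normSq μ * (star v ⬝ᵥ (Pc *ᵥ v)).re - (star v ⬝ᵥ (Pc *ᵥ v)).re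
          + (star v ⬝ᵥ v).re) := by
    rw [hQmap]
    rw [Matrix.neg_mulVec, Matrix.add_mulVec, Matrix.sub_mulVec, one_mulVec]
    rw [dotProduct_neg, dotProduct_add, dotProduct_sub, hquadM]
    simp [Complex.re_ofReal_mul]
  rw [hbval] at hb
  have hlt : Complex.normSq μ < 1 := by nlinarith
  have hsq : ‖μ‖ ^ 2 = Complex.normSq μ := by
    rw [Complex.sq_norm]
  nlinarith [norm_nonneg μ]
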